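/- Let X = (-10, 10) with the usual metric, and define T : X → CB(X) by T x = {-2} for x ∈ (-10,0), T x = [0, 5x/6] for x ∈ [0,2], T x = [0, 2x - 5/3] for x ∈ (2,5], and T x = {9} for x ∈ (5,10). Define α(x,y) = 1 if x, y ∈ [0,2] and 0 otherwise. Then: (a) (X,d) is α-complete, (b) T is α-continuous but not continuous, (c) T is triangular α-admissible, and (d) with ζ(t,s) = (5/6)s − t and G(s,t) = s − t, T is an α-admissible generalized Z_G-contractive multivalued mapping with C_G = 0; consequently T has a fixed point. -/

import Mathlib

open Metric Filter

noncomputable def MM {X : Type*} [MetricSpace X] (T : X → Set X) (x y : X) : ℝ :=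
  max (max (dist x y) (infDist x (T x)))
    (max (infDist y (T y)) ((infDist x (T y) + infDist y (T x)) / 2))

def CClass (G : ℝ → ℝ → ℝ) : Prop :=
  Continuous (fun p : ℝ × ℝ => G p.1 p.2) ∧
  (∀ s t, 0 ≤ s → 0 ≤ t → G s t ≤ s) ∧
  (∀ s t, 0 ≤ s → 0 ≤ t → G s t = s → s = 0 ∨ t = 0)

def PropCG (G : ℝ → ℝ → ℝ) (c : ℝ) : Prop :=
  0 ≤ c ∧ (∀ s t, 0 ≤ s → 0 ≤ t → c < G s t → t < s) ∧ (∀ t, 0 ≤ t → G t t ≤ c)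

def CGSim (ζ G : ℝ → ℝ → ℝ) (c : ℝ) : Prop :=
  (∀ t s, 0 < t → 0 < s → ζ t s < G s t) ∧
  ∀ (tn sn : ℕ → ℝ) (l : ℝ), (∀ n, 0 < tn n) → (∀ n, tn n < sn n) → 0 < l →
    Tendsto tn atTop (nhds l) → Tendsto sn atTop (nhds l) →
    limsup (fun n => ζ (tn n) (sn n)) atTop < c

def TriAdm {X : Type*} (T : X → Set X) (α : X → X → ℝ) : Prop :=
  (∀ x, ∀ y ∈ T x, 1 ≤ α x y → ∀ z ∈ T y, 1 ≤ α y z) ∧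
  (∀ x y, 1 ≤ α x y → ∀ z ∈ T y, 1 ≤ α y z → 1 ≤ α x z)

def CBmap {X : Type*} [MetricSpace X] (T : X → Set X) : Prop :=
  ∀ x, (T x).Nonempty ∧ IsClosed (T x) ∧ Bornology.IsBounded (T x)

def AlphaComplete (X : Type*) [MetricSpace X] (α : X → X → ℝ) : Prop :=
  ∀ x : ℕ → X, CauchySeq x → (∀ n, 1 ≤ α (x n) (x (n+1))) → ∃ u, Tendsto x atTop (nhds u)

def AlphaCont {X : Type*} [MetricSpace X] (T : X → Set X) (α : X → X → ℝ) : Prop :=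
  ∀ (x : ℕ → X) (u : X), Tendsto x atTop (nhds u) → (∀ n, 1 ≤ α (x n) (x (n+1))) →
    Tendsto (fun n => hausdorffDist (T (x n)) (T u)) atTop (nhds 0)

abbrev X9 : Type := {x : ℝ // -10 < x ∧ x < 10}

open Classical in
noncomputable def T9 : X9 → Set X9 := fun x =>
  if x.1 < 0 then {y | y.1 = -2}
  else if x.1 ≤ 2 then {y | 0 ≤ y.1 ∧ y.1 ≤ 5 * x.1 / 6}
  else if x.1 ≤ 5 then {y | 0 ≤ y.1 ∧ y.1 ≤ 2 * x.1 - 5 / 3}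
  else {y | y.1 = 9}

open Classical in
noncomputable def α9 : X9 → X9 → ℝ := fun x y =>
  if 0 ≤ x.1 ∧ x.1 ≤ 2 ∧ 0 ≤ y.1 ∧ y.1 ≤ 2 then 1 else 0

lemma X9_bounded (s : Set X9) : Bornology.IsBounded s := by
  apply Bornology.IsBounded.subset _ (Set.subset_univ s)
  rw [Metric.isBounded_iff]
  refine ⟨20, fun x _ y _ => ?_⟩
  rw [Subtype.dist_eq, Real.dist_eq]
  rcases abs_cases (x.1 - y.1) with ⟨h, _⟩ | ⟨h, _⟩ <;>
    rw [h] <;> linarith [x.2.1, x.2.2, y.2.1, y.2.2]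

lemma le_infDist' {Y : Type*} [MetricSpace Y] {s : Set Y} {x : Y} {r : ℝ}
    (hs : s.Nonempty) (h : ∀ y ∈ s, r ≤ dist x y) : r ≤ infDist x s := by
  rw [infDist_eq_iInf]
  have : Nonempty s := hs.to_subtype
  exact le_ciInf fun q => h q q.2

lemma alpha_one_iff {x y : X9} :
    1 ≤ α9 x y ↔ (0 ≤ x.1 ∧ x.1 ≤ 2 ∧ 0 ≤ y.1 ∧ y.1 ≤ 2) := by
  unfold α9; split_ifs with h <;> simp [h]

lemma T9_eq {x : X9} (h0 : 0 ≤ x.1) (h2 : x.1 ≤ 2) :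
    T9 x = {y : X9 | 0 ≤ y.1 ∧ y.1 ≤ 5 * x.1 / 6} := by
  simp only [T9, if_neg (not_lt.2 h0), if_pos h2]

lemma T9_eq2 {x : X9} (h2 : 2 < x.1) (h5 : x.1 ≤ 5) :
    T9 x = {y : X9 | 0 ≤ y.1 ∧ y.1 ≤ 2 * x.1 - 5 / 3} := by
  simp only [T9, if_neg (not_lt.2 (by linarith : (0:ℝ) ≤ x.1)),
    if_neg (not_le.2 h2), if_pos h5]

lemma T9_half {x y : X9} (hx0 : 0 ≤ x.1) (hx2 : x.1 ≤ 2) (hy0 : 0 ≤ y.1) (hy2 : y.1 ≤ 2) :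
    ∀ p ∈ T9 x, ∃ q ∈ T9 y, dist p q ≤ 5 / 6 * dist x y := by
  intro p hp
  rw [T9_eq hx0 hx2] at hp
  obtain ⟨hp0, hp1⟩ := hp
  refine ⟨⟨min p.1 (5 * y.1 / 6), by
    constructor
    · have : (0:ℝ) ≤ min p.1 (5 * y.1 / 6) := le_min hp0 (by linarith)
      linarith
    · exact lt_of_le_of_lt (min_le_left _ _) p.2.2⟩, ?_, ?_⟩
  · rw [T9_eq hy0 hy2]
    exact ⟨le_min hp0 (by linarith), min_le_right _ _⟩
  · rw [Subtype.dist_eq, Subtype.dist_eq, Real.dist_eq, Real.dist_eq]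
    show |p.1 - min p.1 (5 * y.1 / 6)| ≤ 5 / 6 * |x.1 - y.1|
    have habs := le_abs_self (x.1 - y.1)
    rcases le_total p.1 (5 * y.1 / 6) with h | h
    · rw [min_eq_left h, sub_self, abs_zero]
      positivity
    · rw [min_eq_right h, abs_of_nonneg (by linarith)]
      linarith

lemma T9_hdist {x y : X9} (hx0 : 0 ≤ x.1) (hx2 : x.1 ≤ 2) (hy0 : 0 ≤ y.1) (hy2 : y.1 ≤ 2) :
    hausdorffDist (T9 x) (T9 y) ≤ 5 / 6 * dist x y := by
  refine hausdorffDist_le_of_mem_dist (by positivity) (T9_half hx0 hx2 hy0 hy2) ?_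
  intro p hp
  obtain ⟨q, hq, hd⟩ := T9_half hy0 hy2 hx0 hx2 p hp
  rw [dist_comm y x] at hd
  exact ⟨q, hq, hd⟩

theorem stmt9 :
    AlphaComplete X9 α9 ∧
    (AlphaCont T9 α9 ∧
      ¬ (∀ (x : ℕ → X9) (u : X9), Tendsto x atTop (nhds u) →
        Tendsto (fun n => hausdorffDist (T9 (x n)) (T9 u)) atTop (nhds 0))) ∧
    TriAdm T9 α9 ∧
    (∀ x y : X9, x ≠ y →
      (0 : ℝ) ≤ 5 / 6 * MM T9 x y - α9 x y * hausdorffDist (T9 x) (T9 y)) ∧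
    ∃ u : X9, u ∈ T9 u := by
  refine ⟨?_, ⟨?_, ?_⟩, ⟨?_, ?_⟩, ?_, ?_⟩
  · -- AlphaComplete
    intro x hx hα
    have hmem : ∀ n, 0 ≤ (x n).1 ∧ (x n).1 ≤ 2 := fun n => by
      have h := alpha_one_iff.mp (hα n); exact ⟨h.1, h.2.1⟩
    have hc : CauchySeq (fun n => (x n).1) :=
      uniformContinuous_subtype_val.comp_cauchySeq hx
    obtain ⟨u, hu⟩ := cauchySeq_tendsto_of_complete hc
    have hu2 : u ∈ Set.Icc (0:ℝ) 2 :=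
      isClosed_Icc.mem_of_tendsto hu (Eventually.of_forall fun n => hmem n)
    refine ⟨⟨u, by constructor <;> [linarith [hu2.1]; linarith [hu2.2]]⟩, ?_⟩
    exact tendsto_subtype_rng.2 hu
  · -- AlphaCont
    intro x u hxu hα
    have hmem : ∀ n, 0 ≤ (x n).1 ∧ (x n).1 ≤ 2 := fun n => by
      have h := alpha_one_iff.mp (hα n); exact ⟨h.1, h.2.1⟩
    have huv : Tendsto (fun n => (x n).1) atTop (nhds u.1) := tendsto_subtype_rng.1 hxu
    have hu2 : u.1 ∈ Set.Icc (0:ℝ) 2 :=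
      isClosed_Icc.mem_of_tendsto huv (Eventually.of_forall fun n => hmem n)
    refine squeeze_zero (fun n => hausdorffDist_nonneg)
      (fun n => T9_hdist (hmem n).1 (hmem n).2 hu2.1 hu2.2) ?_
    have hd : Tendsto (fun n => dist (x n) u) atTop (nhds 0) :=
      tendsto_iff_dist_tendsto_zero.mp hxu
    simpa using hd.const_mul (5/6 : ℝ)
  · -- not continuous
    intro hcont
    have hb : ∀ n : ℕ, (0:ℝ) < 1 / (n + 1) ∧ (1:ℝ) / (n + 1) ≤ 1 := fun n =>
      ⟨by positivity, by
        rw [div_le_one (by positivity)]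
        have : (0:ℝ) ≤ (n:ℝ) := Nat.cast_nonneg n
        linarith⟩
    set x : ℕ → X9 := fun n => ⟨2 + 1 / (n + 1), by
      constructor <;> [linarith [(hb n).1]; linarith [(hb n).2]]⟩ with hxdef
    have u2 : X9 := ⟨2, by norm_num⟩
    have hx : Tendsto x atTop (nhds (⟨2, by norm_num⟩ : X9)) := by
      rw [tendsto_subtype_rng]
      simpa [hxdef] using (tendsto_const_nhds (x := (2:ℝ))).add (tendsto_one_div_add_atTop_nhds_zero_nat (𝕜 := ℝ))
    have h := hcont x _ hx
    have hev : ∀ᶠ n in atTop,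
        hausdorffDist (T9 (x n)) (T9 (⟨2, by norm_num⟩ : X9)) < 2/3 :=
      h.eventually_lt_const (by norm_num)
    obtain ⟨n, hn⟩ := hev.exists
    -- lower bound
    have hxn : (x n).1 = 2 + 1 / (n + 1) := rfl
    have hTn : T9 (x n) = {y : X9 | 0 ≤ y.1 ∧ y.1 ≤ 2 * (x n).1 - 5 / 3} :=
      T9_eq2 (by rw [hxn]; linarith [(hb n).1]) (by rw [hxn]; linarith [(hb n).2])
    have hT2 : T9 (⟨2, by norm_num⟩ : X9) = {y : X9 | 0 ≤ y.1 ∧ y.1 ≤ 5 * 2 / 6} :=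
      T9_eq (by norm_num) (by norm_num)
    set p : X9 := ⟨2 * (x n).1 - 5 / 3, by
      rw [hxn]; constructor <;> [linarith [(hb n).1]; linarith [(hb n).2]]⟩ with hpdef
    have hpmem : p ∈ T9 (x n) := by
      rw [hTn]
      refine ⟨?_, le_refl _⟩
      show (0:ℝ) ≤ 2 * (x n).1 - 5 / 3
      rw [hxn]; linarith [(hb n).1]
    have hzero : (⟨0, by norm_num⟩ : X9) ∈ T9 (⟨2, by norm_num⟩ : X9) := by
      rw [hT2]; exact ⟨le_refl _, by norm_num⟩
    have hne : (T9 (⟨2, by norm_num⟩ : X9)).Nonempty := ⟨_, hzero⟩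
    have hfin : EMetric.hausdorffEdist (T9 (x n)) (T9 (⟨2, by norm_num⟩ : X9)) ≠ ⊤ :=
      hausdorffEdist_ne_top_of_nonempty_of_bounded ⟨_, hpmem⟩ hne
        (X9_bounded _) (X9_bounded _)
    have hinf : (2/3 : ℝ) ≤ infDist p (T9 (⟨2, by norm_num⟩ : X9)) := by
      refine le_infDist' hne fun q hq => ?_
      rw [hT2] at hq
      rw [Subtype.dist_eq, Real.dist_eq]
      have hpv : p.1 = 2 * (x n).1 - 5 / 3 := rfl
      have h23 : (2/3 : ℝ) ≤ p.1 - q.1 := by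
        rw [hpv, hxn]; linarith [(hb n).1, hq.2]
      exact h23.trans (le_abs_self _)
    have := hinf.trans (infDist_le_hausdorffDist_of_mem hpmem hfin)
    linarith
  · -- TriAdm part 1
    intro x y _ hxy z hz
    rw [alpha_one_iff] at hxy ⊢
    obtain ⟨_, _, hy0, hy2⟩ := hxy
    rw [T9_eq hy0 hy2] at hz
    exact ⟨hy0, hy2, hz.1, by linarith [hz.2]⟩
  · -- TriAdm part 2
    intro x y hxy z _ hyz
    rw [alpha_one_iff] at hxy hyz ⊢
    exact ⟨hxy.1, hxy.2.1, hyz.2.2.1, hyz.2.2.2⟩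
  · -- contraction
    intro x y _
    have hM : 0 ≤ MM T9 x y := by
      unfold MM; exact le_max_of_le_left (le_max_of_le_left dist_nonneg)
    have hdM : dist x y ≤ MM T9 x y := by
      unfold MM; exact le_max_of_le_left (le_max_left _ _)
    unfold α9
    split_ifs with h
    · obtain ⟨hx0, hx2, hy0, hy2⟩ := h
      have hH := T9_hdist hx0 hx2 hy0 hy2
      have : hausdorffDist (T9 x) (T9 y) ≤ 5 / 6 * MM T9 x y := hH.trans (by linarith)
      linarith
    · rw [zero_mul, sub_zero]; linarith
  · -- fixed point
    refine ⟨⟨0, by norm_num⟩, ?_⟩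
    rw [T9_eq (le_refl 0) (by norm_num)]
    exact ⟨le_refl _, by norm_num⟩
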